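/- Suppose the linear operator 𝒜 : ℝ^{m×n} → ℝ^p satisfies the restricted isometry property with constant δ_r(𝒜), and let Ψ be an orthonormal set of matrices in ℝ^{m×n} such that rank(P_Ψ X) ≤ r for all X ∈ ℝ^{m×n}, where P_Ψ denotes orthogonal projection onto span(Ψ). Then for all b ∈ ℝ^p, ‖P_Ψ 𝒜* b‖_F ≤ √(1+δ_r(𝒜)) ‖b‖₂. -/

import Mathlib

open scoped BigOperators
open Matrix

noncomputable section

/-- Frobenius (trace) inner product of real matrices. -/
def frobInner {m n : ℕ} (X Y : Matrix (Fin m) (Fin n) ℝ) : ℝ :=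
  ∑ i, ∑ j, X i j * Y i j

/-- Frobenius norm of a real matrix. -/
def frobNorm {m n : ℕ} (X : Matrix (Fin m) (Fin n) ℝ) : ℝ :=
  Real.sqrt (frobInner X X)

/-- Euclidean norm of a vector in ℝ^p. -/
def vecNorm {p : ℕ} (b : Fin p → ℝ) : ℝ :=
  Real.sqrt (∑ i, b i ^ 2)

/-- A finite set of matrices is orthonormal w.r.t. the trace inner product. -/
def IsOrthonormalSet {m n : ℕ} (Ψ : Finset (Matrix (Fin m) (Fin n) ℝ)) : Prop :=
  (∀ ψ ∈ Ψ, frobInner ψ ψ = 1) ∧ ∀ ψ ∈ Ψ, ∀ φ ∈ Ψ, ψ ≠ φ → frobInner ψ φ = 0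

/-- Orthogonal projection onto the span of an orthonormal family Ψ. -/
def projSpan {m n : ℕ} (Ψ : Finset (Matrix (Fin m) (Fin n) ℝ))
    (X : Matrix (Fin m) (Fin n) ℝ) : Matrix (Fin m) (Fin n) ℝ :=
  ∑ ψ ∈ Ψ, frobInner ψ X • ψ

lemma frobInner_comm {m n : ℕ} (X Y : Matrix (Fin m) (Fin n) ℝ) :
    frobInner X Y = frobInner Y X := by
  simp [frobInner, mul_comm]

lemma frobInner_self_nonneg {m n : ℕ} (X : Matrix (Fin m) (Fin n) ℝ) :
    0 ≤ frobInner X X := by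
  apply Finset.sum_nonneg; intro i _
  apply Finset.sum_nonneg; intro j _
  exact mul_self_nonneg _

lemma frobInner_smul_right {m n : ℕ} (a : ℝ) (X Y : Matrix (Fin m) (Fin n) ℝ) :
    frobInner X (a • Y) = a * frobInner X Y := by
  simp [frobInner, Finset.mul_sum, Matrix.smul_apply, mul_left_comm]

lemma frobInner_add_right {m n : ℕ} (X Y Z : Matrix (Fin m) (Fin n) ℝ) :
    frobInner X (Y + Z) = frobInner X Y + frobInner X Z := by
  simp [frobInner, Matrix.add_apply, mul_add, Finset.sum_add_distrib]

lemma frobInner_sum_right {m n : ℕ} {ι : Type*} (s : Finset ι)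
    (X : Matrix (Fin m) (Fin n) ℝ) (f : ι → Matrix (Fin m) (Fin n) ℝ) :
    frobInner X (∑ t ∈ s, f t) = ∑ t ∈ s, frobInner X (f t) := by
  classical
  induction s using Finset.induction with
  | empty => simp [frobInner]
  | insert a s h ih => rw [Finset.sum_insert h, Finset.sum_insert h, frobInner_add_right, ih]

lemma frobNorm_nonneg {m n : ℕ} (X : Matrix (Fin m) (Fin n) ℝ) : 0 ≤ frobNorm X :=
  Real.sqrt_nonneg _

lemma frobNorm_sq {m n : ℕ} (X : Matrix (Fin m) (Fin n) ℝ) :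
    frobNorm X ^ 2 = frobInner X X :=
  Real.sq_sqrt (frobInner_self_nonneg X)

lemma vecNorm_nonneg {p : ℕ} (b : Fin p → ℝ) : 0 ≤ vecNorm b := Real.sqrt_nonneg _

lemma vecNorm_sq {p : ℕ} (b : Fin p → ℝ) : vecNorm b ^ 2 = ∑ i, b i ^ 2 :=
  Real.sq_sqrt (Finset.sum_nonneg fun i _ => sq_nonneg _)

/-- Proposition 2.1, inequality (2.3): ‖P_Ψ 𝒜* b‖_F ≤ √(1+δ_r) ‖b‖₂. -/
theorem proj_adjoint_bound {m n p r : ℕ}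
    (A : Matrix (Fin m) (Fin n) ℝ →ₗ[ℝ] (Fin p → ℝ))
    (Aadj : (Fin p → ℝ) →ₗ[ℝ] Matrix (Fin m) (Fin n) ℝ)
    (hadj : ∀ (X : Matrix (Fin m) (Fin n) ℝ) (c : Fin p → ℝ),
      ∑ i, A X i * c i = frobInner (Aadj c) X)
    (δ : ℝ) (hδ : 0 ≤ δ)
    (hRIP : ∀ X : Matrix (Fin m) (Fin n) ℝ, X.rank ≤ r →
      (1 - δ) * frobNorm X ^ 2 ≤ vecNorm (A X) ^ 2 ∧
        vecNorm (A X) ^ 2 ≤ (1 + δ) * frobNorm X ^ 2)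
    (Ψ : Finset (Matrix (Fin m) (Fin n) ℝ)) (hΨ : IsOrthonormalSet Ψ)
    (hrank : ∀ X : Matrix (Fin m) (Fin n) ℝ, (projSpan Ψ X).rank ≤ r) :
    ∀ b : Fin p → ℝ,
      frobNorm (projSpan Ψ (Aadj b)) ≤ Real.sqrt (1 + δ) * vecNorm b := by
  intro b
  set Y : Matrix (Fin m) (Fin n) ℝ := projSpan Ψ (Aadj b) with hY
  set c : Matrix (Fin m) (Fin n) ℝ → ℝ := fun ψ => frobInner ψ (Aadj b) with hc
  -- inner products with each ψ
  have hYψ : ∀ ψ ∈ Ψ, frobInner ψ Y = c ψ := by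
    intro ψ hψ
    rw [hY, projSpan, frobInner_sum_right]
    rw [Finset.sum_eq_single ψ]
    · rw [frobInner_smul_right, hΨ.1 ψ hψ, mul_one]
    · intro φ hφ hne
      rw [frobInner_smul_right, hΨ.2 ψ hψ φ hφ (Ne.symm hne), mul_zero]
    · intro h; exact absurd hψ h
  have hYψ' : ∀ ψ ∈ Ψ, frobInner Y ψ = c ψ := fun ψ hψ =>
    (frobInner_comm Y ψ).trans (hYψ ψ hψ)
  -- ⟨Y, Y⟩ = ∑ c ψ ^ 2
  have hYY : frobInner Y Y = ∑ ψ ∈ Ψ, c ψ ^ 2 := by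
    calc frobInner Y Y = frobInner Y (∑ ψ ∈ Ψ, c ψ • ψ) := rfl
    _ = ∑ ψ ∈ Ψ, c ψ * frobInner Y ψ := by
        rw [frobInner_sum_right]
        exact Finset.sum_congr rfl fun ψ hψ => frobInner_smul_right _ _ _
    _ = ∑ ψ ∈ Ψ, c ψ ^ 2 := Finset.sum_congr rfl fun ψ hψ => by
        rw [hYψ' ψ hψ, sq]
  -- ⟨Aadj b, Y⟩ = ∑ c ψ ^ 2
  have hAY : frobInner (Aadj b) Y = ∑ ψ ∈ Ψ, c ψ ^ 2 := by
    calc frobInner (Aadj b) Y = frobInner (Aadj b) (∑ ψ ∈ Ψ, c ψ • ψ) := rfl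
    _ = ∑ ψ ∈ Ψ, c ψ * frobInner (Aadj b) ψ := by
        rw [frobInner_sum_right]
        exact Finset.sum_congr rfl fun ψ hψ => frobInner_smul_right _ _ _
    _ = ∑ ψ ∈ Ψ, c ψ ^ 2 := Finset.sum_congr rfl fun ψ hψ => by
        rw [frobInner_comm, sq]
  have key : frobNorm Y ^ 2 = ∑ i, A Y i * b i := by
    rw [frobNorm_sq, hYY, ← hAY, ← hadj Y b]
  -- Cauchy–Schwarz
  have hCS : ∑ i, A Y i * b i ≤ vecNorm (A Y) * vecNorm b := by
    calc ∑ i, A Y i * b i ≤ |∑ i, A Y i * b i| := le_abs_self _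
    _ = Real.sqrt ((∑ i, A Y i * b i) ^ 2) := (Real.sqrt_sq_eq_abs _).symm
    _ ≤ Real.sqrt ((∑ i, A Y i ^ 2) * ∑ i, b i ^ 2) :=
        Real.sqrt_le_sqrt (Finset.sum_mul_sq_le_sq_mul_sq Finset.univ (A Y) b)
    _ = vecNorm (A Y) * vecNorm b := by
        rw [Real.sqrt_mul (Finset.sum_nonneg fun i _ => sq_nonneg _)]; rfl
  -- RIP upper bound
  have hrip : vecNorm (A Y) ≤ Real.sqrt (1 + δ) * frobNorm Y := by
    have h2 := (hRIP Y (hrank (Aadj b))).2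
    calc vecNorm (A Y) = Real.sqrt (vecNorm (A Y) ^ 2) := by
          rw [Real.sqrt_sq (vecNorm_nonneg _)]
    _ ≤ Real.sqrt ((1 + δ) * frobNorm Y ^ 2) := Real.sqrt_le_sqrt h2
    _ = Real.sqrt (1 + δ) * frobNorm Y := by
        rw [Real.sqrt_mul (by linarith), Real.sqrt_sq (frobNorm_nonneg _)]
  -- conclude
  rcases eq_or_lt_of_le (frobNorm_nonneg Y) with h0 | h0
  · rw [← h0]
    exact mul_nonneg (Real.sqrt_nonneg _) (vecNorm_nonneg b)
  · have : frobNorm Y ^ 2 ≤ (Real.sqrt (1 + δ) * vecNorm b) * frobNorm Y := by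
      calc frobNorm Y ^ 2 = ∑ i, A Y i * b i := key
      _ ≤ vecNorm (A Y) * vecNorm b := hCS
      _ ≤ (Real.sqrt (1 + δ) * frobNorm Y) * vecNorm b :=
          mul_le_mul_of_nonneg_right hrip (vecNorm_nonneg b)
      _ = (Real.sqrt (1 + δ) * vecNorm b) * frobNorm Y := by ring
    rw [sq] at this
    exact le_of_mul_le_mul_right (by linarith [this]) h0
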